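/- Let T be a bounded self-adjoint operator on a complex Hilbert space H, x ∈ H a unit vector, and f a convex continuous function on an interval containing the spectrum of T. Then f(⟨Tx,x⟩) ≤ ⟨f(T)x,x⟩. -/

import Mathlib

set_option synthInstance.maxHeartbeats 1000000
set_option maxHeartbeats 1000000

open scoped InnerProductSpace

lemma supp_line {f : ℝ → ℝ} {I : Set ℝ} (hconv : ConvexOn ℝ I f)
    (hcont : ContinuousOn f I) {a b m : ℝ} (hI : Set.Icc a b ⊆ I)
    (hm : m ∈ Set.Icc a b) {ε : ℝ} (hε : 0 < ε) :
    ∃ c : ℝ, ∀ t ∈ Set.Icc a b, f m - ε + c * (t - m) ≤ f t := by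
  obtain ⟨hma, hmb⟩ := hm
  have hab : a ≤ b := hma.trans hmb
  have haI : a ∈ I := hI ⟨le_rfl, hab⟩
  have hbI : b ∈ I := hI ⟨hab, le_rfl⟩
  have hmI : m ∈ I := hI ⟨hma, hmb⟩
  rcases eq_or_lt_of_le hab with hab' | hab'
  · -- a = b
    refine ⟨0, fun t ht => ?_⟩
    have h1 : t = m := by rcases ht with ⟨h2, h3⟩; linarith
    rw [h1]
    simp only [sub_self, mul_zero, add_zero]
    linarith
  rcases eq_or_lt_of_le hma with hma' | hma'
  · -- m = a < b : continuity trick at a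
    obtain ⟨δ, hδ, hδ'⟩ := Metric.continuousWithinAt_iff.mp (hcont m hmI) ε hε
    set r : ℝ := min (m + δ / 2) b with hr_def
    have hmr : m < r := lt_min (by linarith) (hma' ▸ hab')
    have hrb : r ≤ b := min_le_right _ _
    have hrI : r ∈ I := hI ⟨hma' ▸ hmr.le, hrb⟩
    refine ⟨min ((f r - f m) / (r - m)) 0, fun t ht => ?_⟩
    have h0 : m ≤ t := hma' ▸ ht.1
    by_cases htr : t ≤ r
    · have h1 : dist t m < δ := by
        rw [Real.dist_eq, abs_of_nonneg (by linarith)]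
        have : r ≤ m + δ / 2 := min_le_left _ _
        linarith
      have h2 : dist (f t) (f m) < ε := hδ' (hI ⟨ht.1, ht.2⟩) h1
      rw [Real.dist_eq, abs_lt] at h2
      have h3 : min ((f r - f m) / (r - m)) 0 * (t - m) ≤ 0 :=
        mul_nonpos_of_nonpos_of_nonneg (min_le_right _ _) (by linarith)
      linarith
    · push_neg at htr
      have htI : t ∈ I := hI ⟨ht.1, ht.2⟩
      have h1 : (f r - f m) / (r - m) ≤ (f t - f m) / (t - m) :=
        hconv.secant_mono hmI hrI htI hmr.ne' (hmr.trans htr).ne' htr.le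
      have h2 : min ((f r - f m) / (r - m)) 0 ≤ (f t - f m) / (t - m) :=
        (min_le_left _ _).trans h1
      rw [le_div_iff₀ (by linarith [hmr.trans htr])] at h2
      linarith
  rcases eq_or_lt_of_le hmb with hmb' | hmb'
  · -- m = b, a < b : continuity trick at b
    obtain ⟨δ, hδ, hδ'⟩ := Metric.continuousWithinAt_iff.mp (hcont m hmI) ε hε
    set r : ℝ := max (m - δ / 2) a with hr_def
    have hmr : r < m := max_lt (by linarith) (hmb' ▸ hma')
    have hra : a ≤ r := le_max_right _ _
    have hrI : r ∈ I := hI ⟨hra, hmb' ▸ hmr.le⟩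
    refine ⟨max ((f r - f m) / (r - m)) 0, fun t ht => ?_⟩
    have h0 : t ≤ m := hmb' ▸ ht.2
    by_cases htr : r ≤ t
    · have h1 : dist t m < δ := by
        rw [Real.dist_eq, abs_of_nonpos (by linarith)]
        have : m - δ / 2 ≤ r := le_max_left _ _
        linarith
      have h2 : dist (f t) (f m) < ε := hδ' (hI ⟨ht.1, ht.2⟩) h1
      rw [Real.dist_eq, abs_lt] at h2
      have h3 : max ((f r - f m) / (r - m)) 0 * (t - m) ≤ 0 :=
        mul_nonpos_of_nonneg_of_nonpos (le_max_right _ _) (by linarith)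
      linarith
    · push_neg at htr
      have htI : t ∈ I := hI ⟨ht.1, ht.2⟩
      have h1 : (f t - f m) / (t - m) ≤ (f r - f m) / (r - m) :=
        hconv.secant_mono hmI htI hrI (htr.trans hmr).ne hmr.ne htr.le
      have h2 : (f t - f m) / (t - m) ≤ max ((f r - f m) / (r - m)) 0 :=
        h1.trans (le_max_left _ _)
      rw [div_le_iff_of_neg (by linarith [htr.trans hmr])] at h2
      linarith
  · -- a < m < b : supporting line via sSup of left slopes
    set S : Set ℝ := (fun u => (f u - f m) / (u - m)) '' Set.Ico a m with hS_def
    have hSne : S.Nonempty := ⟨_, ⟨a, ⟨le_rfl, hma'⟩, rfl⟩⟩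
    have key : ∀ u ∈ Set.Ico a m, ∀ t, m < t → t ∈ I →
        (f u - f m) / (u - m) ≤ (f t - f m) / (t - m) := by
      intro u hu t hmt htI
      exact hconv.secant_mono hmI (hI ⟨hu.1, hu.2.le.trans hmb⟩) htI hu.2.ne
        hmt.ne' (hu.2.le.trans hmt.le)
    have hSbdd : BddAbove S := ⟨(f b - f m) / (b - m), by
      rintro s ⟨u, hu, rfl⟩
      exact key u hu b hmb' hbI⟩
    refine ⟨sSup S, fun t ht => ?_⟩
    have htI : t ∈ I := hI ht
    rcases lt_trichotomy t m with h | h | h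
    · have h1 : (f t - f m) / (t - m) ≤ sSup S := le_csSup hSbdd ⟨t, ⟨ht.1, h⟩, rfl⟩
      rw [div_le_iff_of_neg (by linarith)] at h1
      linarith
    · subst h; simp; linarith
    · have h1 : sSup S ≤ (f t - f m) / (t - m) := csSup_le hSne (by
        rintro s ⟨u, hu, rfl⟩
        exact key u hu t h htI)
      rw [le_div_iff₀ (by linarith)] at h1
      linarith

theorem stmt_17 {H : Type*} [NormedAddCommGroup H] [InnerProductSpace ℂ H] [CompleteSpace H]
    (T : H →L[ℂ] H) (hT : IsSelfAdjoint T) (x : H) (hx : ‖x‖ = 1)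
    (f : ℝ → ℝ) (I : Set ℝ) (hIspec : spectrum ℝ T ⊆ I)
    (hconv : ConvexOn ℝ I f) (hcont : ContinuousOn f I) :
    f ((⟪T x, x⟫_ℂ).re) ≤ (⟪(cfc f T) x, x⟫_ℂ).re := by
  have hx0 : x ≠ 0 := by intro h; rw [h, norm_zero] at hx; norm_num at hx
  haveI : Nontrivial H := nontrivial_of_ne x 0 hx0
  -- bridge: operator order to inner products
  have bridge : ∀ A B : H →L[ℂ] H, A ≤ B → (⟪A x, x⟫_ℂ).re ≤ (⟪B x, x⟫_ℂ).re := by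
    intro A B h
    rw [ContinuousLinearMap.le_def] at h
    have h2 := h.inner_nonneg_left x
    simp only [ContinuousLinearMap.sub_apply, inner_sub_left, map_sub,
      RCLike.re_to_complex, Complex.sub_re] at h2
    have h3 := (Complex.le_def.mp h2).1
    simp only [Complex.zero_re, Complex.sub_re] at h3
    linarith
  have l1 : ∀ (r : ℝ) (y : H), (⟪r • y, x⟫_ℂ).re = r * (⟪y, x⟫_ℂ).re := by
    intro r y
    rw [show r • y = (r : ℂ) • y by simp [Complex.coe_smul], inner_smul_left]
    simp [Complex.mul_re, Complex.conj_ofReal]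
  -- inner product with affine image
  have hxx : (⟪x, x⟫_ℂ).re = 1 := by
    rw [inner_self_eq_norm_sq_to_K, hx]; norm_num
  have aff : ∀ α c : ℝ, (⟪(algebraMap ℝ (H →L[ℂ] H) α + c • T) x, x⟫_ℂ).re
      = α + c * (⟪T x, x⟫_ℂ).re := by
    intro α c
    rw [Algebra.algebraMap_eq_smul_one]
    simp only [ContinuousLinearMap.add_apply, ContinuousLinearMap.smul_apply,
      ContinuousLinearMap.one_apply, inner_add_left, Complex.add_re, l1, hxx]
    ring
  set m := (⟪T x, x⟫_ℂ).re with hm_def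
  haveI : Nontrivial (H →L[ℂ] H) :=
    ⟨1, 0, fun h => hx0 (by simpa using DFunLike.congr_fun h x)⟩
  have hne : (spectrum ℝ T).Nonempty := hT.spectrum_nonempty
  have hcpt : IsCompact (spectrum ℝ T) :=
    ContinuousFunctionalCalculus.isCompact_spectrum (R := ℝ) T
  set a := sInf (spectrum ℝ T) with ha_def
  set b := sSup (spectrum ℝ T) with hb_def
  have haSpec : a ∈ spectrum ℝ T := hcpt.sInf_mem hne
  have hbSpec : b ∈ spectrum ℝ T := hcpt.sSup_mem hne
  have hsub : spectrum ℝ T ⊆ Set.Icc a b := fun t ht =>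
    ⟨csInf_le hcpt.bddBelow ht, le_csSup hcpt.bddAbove ht⟩
  have hIccI : Set.Icc a b ⊆ I :=
    (hconv.1.ordConnected).out (hIspec haSpec) (hIspec hbSpec)
  have hconst : ∀ r : ℝ, (⟪(cfc (fun _ : ℝ => r) T) x, x⟫_ℂ).re = r := by
    intro r
    rw [cfc_const r T hT, Algebra.algebraMap_eq_smul_one]
    simp only [ContinuousLinearMap.smul_apply, ContinuousLinearMap.one_apply, l1, hxx]
    ring
  have hTle : T ≤ cfc (fun _ : ℝ => b) T := by
    conv_lhs => rw [← cfc_id ℝ T hT]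
    exact cfc_mono fun t ht => le_csSup hcpt.bddAbove ht
  have hTge : cfc (fun _ : ℝ => a) T ≤ T := by
    conv_rhs => rw [← cfc_id ℝ T hT]
    exact cfc_mono fun t ht => csInf_le hcpt.bddBelow ht
  have hma : a ≤ m := by have h := bridge _ _ hTge; rwa [hconst] at h
  have hmb : m ≤ b := by have h := bridge _ _ hTle; rwa [hconst] at h
  refine le_of_forall_pos_le_add fun ε hε => ?_
  obtain ⟨c, hc⟩ := supp_line hconv hcont hIccI ⟨hma, hmb⟩ hε
  have hgle : cfc (fun t : ℝ => (f m - ε - c * m) + c * t) T ≤ cfc f T := by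
    refine cfc_mono (fun t ht => ?_) (by fun_prop) (hcont.mono hIspec)
    have := hc t (hsub ht)
    linarith
  have heq : cfc (fun t : ℝ => (f m - ε - c * m) + c * t) T
      = algebraMap ℝ (H →L[ℂ] H) (f m - ε - c * m) + c • T := by
    rw [cfc_const_add (f m - ε - c * m) (fun t : ℝ => c * t) T (by fun_prop) hT,
      cfc_const_mul c (fun t : ℝ => t) T (by fun_prop), cfc_id' ℝ T hT]
  have final := bridge _ _ hgle
  rw [heq, aff] at final
  linarith
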